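/- Let p > 1, κ > 0, k₁ > 0 and T ≥ 0. Suppose y : [T,∞) → [0,∞) is differentiable and satisfies y'(t) ≤ κ p·y(t) − k₁·y(t)^{1+1/p} for all t > T. Then for all t ≥ T + 1 one has y(t) ≤ [ (k₁/(κ p))·(1 − e^{−κ}) ]^{−p}. -/

import Mathlib

open Real Set

theorem ode_comparison_superlinear
    (p κ k₁ T : ℝ) (hp : 1 < p) (hκ : 0 < κ) (hk₁ : 0 < k₁) (hT : 0 ≤ T)
    (y y' : ℝ → ℝ)
    (hynn : ∀ t, T ≤ t → 0 ≤ y t)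
    (hderiv : ∀ t, T ≤ t → HasDerivWithinAt y (y' t) (Ici T) t)
    (hineq : ∀ t, T < t → y' t ≤ κ * p * y t - k₁ * y t ^ (1 + 1 / p)) :
    ∀ t, T + 1 ≤ t → y t ≤ (k₁ / (κ * p) * (1 - Real.exp (-κ))) ^ (-p) := by
  intro t₀ ht₀
  have hp0 : (0:ℝ) < p := lt_trans one_pos hp
  have hκp : 0 < κ * p := mul_pos hκ hp0
  have hc : 0 < k₁ / (κ * p) := div_pos hk₁ hκp
  set c := k₁ / (κ * p) with hcdef
  have hexp1 : Real.exp (-κ) < 1 := Real.exp_lt_one_iff.mpr (by linarith)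
  have hbase : 0 < c * (1 - Real.exp (-κ)) := mul_pos hc (by linarith)
  have hRHS : 0 < (c * (1 - Real.exp (-κ))) ^ (-p) := Real.rpow_pos_of_pos hbase _
  have hTt₀ : T < t₀ := by linarith
  have hdA : ∀ r, T < r → HasDerivAt y (y' r) r := fun r hr =>
    (hderiv r hr.le).hasDerivAt (Ici_mem_nhds hr)
  have hycont : ContinuousOn y (Icc T t₀) := fun r hr =>
    ((hderiv r hr.1).continuousWithinAt).mono (fun x hx => hx.1)
  by_cases hz : ∃ s ∈ Icc T t₀, y s = 0
  · -- y vanishes somewhere; then y t₀ = 0 ≤ RHS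
    obtain ⟨s, hs, hys⟩ := hz
    have hy0 : y t₀ = 0 := by
      set h : ℝ → ℝ := fun r => Real.exp (-(κ * p) * r) * y r with hh
      have hdh : ∀ r ∈ Ioo s t₀, HasDerivAt h
          (Real.exp (-(κ * p) * r) * (-(κ * p)) * y r
            + Real.exp (-(κ * p) * r) * y' r) r := by
        intro r hr
        have hTr : T < r := lt_of_le_of_lt hs.1 hr.1
        have H := (((hasDerivAt_id r).const_mul (-(κ * p))).exp).mul (hdA r hTr)
        simp only [id_eq, mul_one] at H
        exact H
      have hanti : AntitoneOn h (Icc s t₀) := by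
        apply antitoneOn_of_deriv_nonpos (convex_Icc s t₀)
        · exact ((Real.continuous_exp.comp (continuous_const.mul continuous_id)).continuousOn).mul
            (hycont.mono (Icc_subset_Icc hs.1 le_rfl))
        · intro r hr
          rw [interior_Icc] at hr
          exact (hdh r hr).differentiableAt.differentiableWithinAt
        · intro r hr
          rw [interior_Icc] at hr
          rw [(hdh r hr).deriv]
          have hTr : T < r := lt_of_le_of_lt hs.1 hr.1
          have hyr : 0 ≤ y r := hynn r hTr.le
          have h1 : y' r ≤ κ * p * y r := by
            have := hineq r hTr
            have : 0 ≤ k₁ * y r ^ (1 + 1/p) :=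
              mul_nonneg hk₁.le (Real.rpow_nonneg hyr _)
            linarith [hineq r hTr]
          have hepos : 0 < Real.exp (-(κ * p) * r) := Real.exp_pos _
          nlinarith
      have := hanti (left_mem_Icc.mpr hs.2) (right_mem_Icc.mpr hs.2) hs.2
      simp only [hh, hys, mul_zero] at this
      have hepos : 0 < Real.exp (-(κ * p) * t₀) := Real.exp_pos _
      have hynn' := hynn t₀ hTt₀.le
      nlinarith
    rw [hy0]; exact hRHS.le
  · push_neg at hz
    have ypos : ∀ s, s ∈ Icc T t₀ → 0 < y s := fun s hs =>
      lt_of_le_of_ne (hynn s hs.1) (Ne.symm (hz s hs))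
    set u : ℝ → ℝ := fun s => y s ^ (-1/p : ℝ) with hu
    set g : ℝ → ℝ := fun s => Real.exp (κ * s) * (u s - c) with hg
    have hsub : Icc (t₀ - 1) t₀ ⊆ Icc T t₀ := Icc_subset_Icc (by linarith) le_rfl
    have hdg : ∀ r ∈ Ioo (t₀ - 1) t₀, HasDerivAt g
        (Real.exp (κ * r) * κ * (u r - c)
          + Real.exp (κ * r) * (-1/p * y r ^ ((-1/p : ℝ) - 1) * y' r)) r := by
      intro r hr
      have hTr : T < r := by linarith [hr.1]
      have hyr : 0 < y r := ypos r ⟨hTr.le, hr.2.le⟩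
      have hdu : HasDerivAt u (-1/p * y r ^ ((-1/p : ℝ) - 1) * y' r) r := by
        have := (Real.hasDerivAt_rpow_const (p := (-1/p : ℝ)) (Or.inl hyr.ne')).comp r
          (hdA r hTr)
        simp [mul_assoc] at this
        rw [mul_assoc]
        exact this
      have hde : HasDerivAt (fun s => Real.exp (κ * s)) (Real.exp (κ * r) * κ) r := by
        have H := ((hasDerivAt_id r).const_mul κ).exp
        simpa only [id_eq, mul_one] using H
      exact hde.mul (hdu.sub_const c)
    have hmono : MonotoneOn g (Icc (t₀ - 1) t₀) := by
      apply monotoneOn_of_deriv_nonneg (convex_Icc _ _)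
      · apply ((Real.continuous_exp.comp (continuous_const.mul continuous_id)).continuousOn).mul
        apply ContinuousOn.sub _ continuousOn_const
        intro r hr
        have hyr : 0 < y r := ypos r (hsub hr)
        exact (Real.continuousAt_rpow_const (y r) (-1/p) (Or.inl hyr.ne')).comp_continuousWithinAt
          ((hycont r (hsub hr)).mono hsub)
      · intro r hr
        rw [interior_Icc] at hr
        exact (hdg r hr).differentiableAt.differentiableWithinAt
      · intro r hr
        rw [interior_Icc] at hr
        rw [(hdg r hr).deriv]
        have hTr : T < r := by linarith [hr.1]
        have hyr : 0 < y r := ypos r ⟨hTr.le, hr.2.le⟩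
        have hepos : 0 < Real.exp (κ * r) := Real.exp_pos _
        -- key inequality
        have key : -1/p * y r ^ ((-1/p : ℝ) - 1) * y' r ≥ -(κ * (u r - c)) := by
          have h1 : y' r ≤ κ * p * y r - k₁ * y r ^ (1 + 1/p) := hineq r hTr
          have hpow : 0 < y r ^ ((-1/p : ℝ) - 1) := Real.rpow_pos_of_pos hyr _
          have e1 : y r ^ ((-1/p : ℝ) - 1) * y r = y r ^ (-1/p : ℝ) := by
            have e := Real.rpow_add hyr (-1/p - 1) 1
            rw [Real.rpow_one, show (-1/p - 1 + 1 : ℝ) = -1/p by ring] at e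
            exact e.symm
          have e2 : y r ^ ((-1/p : ℝ) - 1) * y r ^ (1 + 1/p : ℝ) = 1 := by
            rw [← Real.rpow_add hyr, show (-1/p - 1 + (1 + 1/p) : ℝ) = 0 by ring,
              Real.rpow_zero]
          have hmul : y r ^ ((-1/p : ℝ) - 1) * y' r
              ≤ y r ^ ((-1/p : ℝ) - 1) * (κ * p * y r - k₁ * y r ^ (1 + 1/p)) :=
            mul_le_mul_of_nonneg_left h1 hpow.le
          have hexpand : y r ^ ((-1/p : ℝ) - 1) * (κ * p * y r - k₁ * y r ^ (1 + 1/p))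
              = κ * p * u r - k₁ := by
            rw [mul_sub]
            rw [show y r ^ ((-1/p : ℝ) - 1) * (κ * p * y r)
                = κ * p * (y r ^ ((-1/p : ℝ) - 1) * y r) by ring, e1]
            rw [show y r ^ ((-1/p : ℝ) - 1) * (k₁ * y r ^ (1 + 1/p))
                = k₁ * (y r ^ ((-1/p : ℝ) - 1) * y r ^ (1 + 1/p)) by ring, e2]
            simp [hu]
          rw [hexpand] at hmul
          have hck : κ * c = k₁ / p := by
            rw [hcdef]; field_simp
          have hp0' : p ≠ 0 := ne_of_gt hp0
          have : -1/p * (y r ^ ((-1/p : ℝ) - 1) * y' r) ≥ -1/p * (κ * p * u r - k₁) := by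
            apply mul_le_mul_of_nonpos_left hmul
            simp [div_nonpos_iff, hp0.le]
          calc -1/p * y r ^ ((-1/p : ℝ) - 1) * y' r
              = -1/p * (y r ^ ((-1/p : ℝ) - 1) * y' r) := by ring
            _ ≥ -1/p * (κ * p * u r - k₁) := this
            _ = -(κ * u r) + k₁ / p := by field_simp; ring
            _ = -(κ * (u r - c)) := by rw [← hck]; ring
        nlinarith [key, hepos]
    have hmem1 : t₀ - 1 ∈ Icc (t₀ - 1) t₀ := left_mem_Icc.mpr (by linarith)
    have hmem2 : t₀ ∈ Icc (t₀ - 1) t₀ := right_mem_Icc.mpr (by linarith)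
    have hglt := hmono hmem1 hmem2 (by linarith)
    have hu1 : 0 ≤ u (t₀ - 1) := Real.rpow_nonneg (hynn _ (by linarith)) _
    have hE : Real.exp (κ * (t₀ - 1)) = Real.exp (κ * t₀) * Real.exp (-κ) := by
      rw [← Real.exp_add]; ring_nf
    have hepos : 0 < Real.exp (κ * t₀) := Real.exp_pos _
    have hut₀ : c * (1 - Real.exp (-κ)) ≤ u t₀ := by
      have h1 : Real.exp (κ * (t₀ - 1)) * (0 - c) ≤ Real.exp (κ * (t₀ - 1)) * (u (t₀ - 1) - c) := by
        apply mul_le_mul_of_nonneg_left _ (Real.exp_pos _).le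
        linarith
      have h2 : Real.exp (κ * (t₀ - 1)) * (0 - c) ≤ Real.exp (κ * t₀) * (u t₀ - c) := le_trans h1 hglt
      rw [hE] at h2
      have hee : 0 < Real.exp (-κ) := Real.exp_pos _
      nlinarith
    have hyid : y t₀ = (u t₀) ^ (-p : ℝ) := by
      show y t₀ = (y t₀ ^ (-1/p : ℝ)) ^ (-p : ℝ)
      rw [← Real.rpow_mul (hynn t₀ hTt₀.le),
        show (-1/p * -p : ℝ) = 1 by field_simp, Real.rpow_one]
    rw [hyid]
    exact Real.rpow_le_rpow_of_nonpos hbase hut₀ (by linarith)
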